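/- Let L, K, J, I be finite types, and let (c,v), (b,u), (a,t) be probabilistic adaptation factors with c : L → K → Bool, v : L → K → ℝ, b : K → J → Bool, u : K → J → ℝ, a : J → I → Bool, t : J → I → ℝ. Suppose every column of a contains at most one true entry and every column of b contains at most one true entry. Then composition of probabilistic adaptation factors is associative: (c,v) ⊗ ((b,u) ⊗ (a,t)) = ((c,v) ⊗ (b,u)) ⊗ (a,t), i.e., both the Boolean first components and the real second components agree entrywise. -/

import Mathlib

/-- Boolean part of the probabilistic composition of `(b,u)` and `(a,t)`. -/
def boolComp {K J I : Type*} [Fintype J]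
    (b : K → J → Bool) (a : J → I → Bool) (k : K) (i : I) : Bool :=
  decide (∃ j, b k j = true ∧ a j i = true)

/-- Real part of the probabilistic composition of `(b,u)` and `(a,t)`:
`v k i = ∏_{j with b k j = true and a j i = true} (u k j * t j i)`. -/
noncomputable def probCompMat {K J I : Type*} [Fintype J]
    (b : K → J → Bool) (u : K → J → ℝ) (a : J → I → Bool) (t : J → I → ℝ)
    (k : K) (i : I) : ℝ :=
  ∏ j ∈ Finset.univ.filter (fun j => b k j = true ∧ a j i = true), (u k j * t j i)

theorem probComp_assoc_of_col_matching {L K J I : Type*}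
    [Fintype L] [Fintype K] [Fintype J] [Fintype I]
    (c : L → K → Bool) (v : L → K → ℝ)
    (b : K → J → Bool) (u : K → J → ℝ)
    (a : J → I → Bool) (t : J → I → ℝ)
    (hcola : ∀ (i : I) (j j' : J), a j i = true → a j' i = true → j = j')
    (hcolb : ∀ (j : J) (k k' : K), b k j = true → b k' j = true → k = k') :
    (∀ (l : L) (i : I),
        boolComp c (boolComp b a) l i = boolComp (boolComp c b) a l i) ∧
    (∀ (l : L) (i : I),
        probCompMat c v (boolComp b a) (probCompMat b u a t) l i
          = probCompMat (boolComp c b) (probCompMat c v b u) a t l i) := by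
  classical
  constructor
  · intro l i
    simp only [boolComp]; refine decide_eq_decide.mpr ?_
    constructor
    · rintro ⟨k, hc, hdec⟩
      simp only [decide_eq_true_eq] at hdec
      obtain ⟨j, hb, ha⟩ := hdec
      exact ⟨j, by simp only [decide_eq_true_eq]; exact ⟨k, hc, hb⟩, ha⟩
    · rintro ⟨j, hdec, ha⟩
      simp only [decide_eq_true_eq] at hdec
      obtain ⟨k, hc, hb⟩ := hdec
      exact ⟨k, hc, by simp only [decide_eq_true_eq]; exact ⟨j, hb, ha⟩⟩
  · intro l i
    by_cases hj : ∃ j, a j i = true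
    · obtain ⟨j0, hj0⟩ := hj
      have haeq : ∀ j, a j i = true → j = j0 := fun j h => hcola i j j0 h hj0
      by_cases hk : ∃ k, c l k = true ∧ b k j0 = true
      · obtain ⟨k0, hck0, hbk0⟩ := hk
        have hkeq : ∀ k, b k j0 = true → k = k0 := fun k h => hcolb j0 k k0 h hbk0
        have hLfilter :
            (Finset.univ.filter (fun k => c l k = true ∧ boolComp b a k i = true)) = {k0} := by
          ext k
          simp only [Finset.mem_filter, Finset.mem_univ, true_and, Finset.mem_singleton,
            boolComp, decide_eq_true_eq]
          constructor
          · rintro ⟨hc, j, hb, ha⟩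
            exact hkeq k (haeq j ha ▸ hb)
          · rintro rfl
            exact ⟨hck0, j0, hbk0, hj0⟩
        have hRfilter :
            (Finset.univ.filter (fun j => boolComp c b l j = true ∧ a j i = true)) = {j0} := by
          ext j
          simp only [Finset.mem_filter, Finset.mem_univ, true_and, Finset.mem_singleton,
            boolComp, decide_eq_true_eq]
          constructor
          · rintro ⟨_, ha⟩
            exact haeq j ha
          · rintro rfl
            exact ⟨⟨k0, hck0, hbk0⟩, hj0⟩
        have hf1 : (Finset.univ.filter (fun j => b k0 j = true ∧ a j i = true)) = {j0} := by
          ext j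
          simp only [Finset.mem_filter, Finset.mem_univ, true_and, Finset.mem_singleton]
          constructor
          · rintro ⟨_, ha⟩; exact haeq j ha
          · rintro rfl; exact ⟨hbk0, hj0⟩
        have hf2 : (Finset.univ.filter (fun k => c l k = true ∧ b k j0 = true)) = {k0} := by
          ext k
          simp only [Finset.mem_filter, Finset.mem_univ, true_and, Finset.mem_singleton]
          constructor
          · rintro ⟨_, hb⟩; exact hkeq k hb
          · rintro rfl; exact ⟨hck0, hbk0⟩
        unfold probCompMat
        rw [hLfilter, hRfilter, Finset.prod_singleton, Finset.prod_singleton, hf1, hf2,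
          Finset.prod_singleton, Finset.prod_singleton]
        ring
      · have hLfilter :
            (Finset.univ.filter (fun k => c l k = true ∧ boolComp b a k i = true)) = ∅ := by
          ext k
          simp only [Finset.mem_filter, Finset.mem_univ, true_and, Finset.notMem_empty,
            iff_false, boolComp, decide_eq_true_eq, not_and]
          rintro hc ⟨j, hb, ha⟩
          exact hk ⟨k, hc, haeq j ha ▸ hb⟩
        have hRfilter :
            (Finset.univ.filter (fun j => boolComp c b l j = true ∧ a j i = true)) = ∅ := by
          ext j
          simp only [Finset.mem_filter, Finset.mem_univ, true_and, Finset.notMem_empty,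
            iff_false, boolComp, decide_eq_true_eq, not_and]
          rintro ⟨k, hc, hb⟩ ha
          exact hk ⟨k, hc, haeq j ha ▸ hb⟩
        unfold probCompMat
        rw [hLfilter, hRfilter, Finset.prod_empty, Finset.prod_empty]
    · push_neg at hj
      have hLfilter :
          (Finset.univ.filter (fun k => c l k = true ∧ boolComp b a k i = true)) = ∅ := by
        ext k
        simp only [Finset.mem_filter, Finset.mem_univ, true_and, Finset.notMem_empty,
          iff_false, boolComp, decide_eq_true_eq, not_and]
        rintro _ ⟨j, _, ha⟩
        exact hj j ha
      have hRfilter :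
          (Finset.univ.filter (fun j => boolComp c b l j = true ∧ a j i = true)) = ∅ := by
        ext j
        simp only [Finset.mem_filter, Finset.mem_univ, true_and, Finset.notMem_empty,
          iff_false, not_and]
        exact fun _ => hj j
      unfold probCompMat
      rw [hLfilter, hRfilter, Finset.prod_empty, Finset.prod_empty]
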